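/- Let q ≥ 1, let f be a formal power series in q variables over ℝ with nonzero constant coefficient f_θ (where θ is the zero multi-index), and let n ≥ 1. Then there exists a q-fps g over ℝ with g^n = f if and only if there exists t ∈ ℝ with t^n = f_θ. -/

import Mathlib

open MvPowerSeries Finsupp

namespace NthRootAux

variable {q : ℕ}

/-- The maximal ideal of `MvPowerSeries (Fin q) ℝ`. -/
noncomputable def I (q : ℕ) : Ideal (MvPowerSeries (Fin q) ℝ) :=
  RingHom.ker (MvPowerSeries.constantCoeff)

lemma mem_I {x : MvPowerSeries (Fin q) ℝ} :
    x ∈ I q ↔ MvPowerSeries.constantCoeff x = 0 := RingHom.mem_ker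

lemma degree_add (a b : Fin q →₀ ℕ) :
    Finsupp.degree (a + b) = Finsupp.degree a + Finsupp.degree b := by
  exact map_add _ a b

lemma degree_single (i : Fin q) : (Finsupp.single i 1).degree = 1 := by
  exact Finsupp.degree_single i 1

/-- Elements of `I^m` have vanishing coefficients in degrees `< m`. -/
lemma coeff_eq_zero_of_mem_pow :
    ∀ m : ℕ, ∀ g ∈ (I q) ^ m, ∀ d : Fin q →₀ ℕ, d.degree < m →
      MvPowerSeries.coeff d g = 0 := by
  intro m
  induction m with
  | zero => intro g _ d hd; omega
  | succ m ih =>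
    intro g hg d hd
    rw [pow_succ] at hg
    refine Submodule.mul_induction_on hg (fun a ha b hb => ?_) (fun x y hx hy => ?_)
    · classical
      rw [MvPowerSeries.coeff_mul]
      refine Finset.sum_eq_zero fun p hp => ?_
      rw [Finset.HasAntidiagonal.mem_antidiagonal] at hp
      by_cases hcase : (p.1 : Fin q →₀ ℕ).degree < m
      · rw [ih a ha p.1 hcase, zero_mul]
      · have hdd : p.1.degree + p.2.degree = d.degree := by rw [← degree_add, hp]
        have h2 : p.2.degree = 0 := by omega
        have : p.2 = 0 := (Finsupp.degree_eq_zero_iff _).mp h2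
        rw [this, MvPowerSeries.coeff_zero_eq_constantCoeff, mem_I.mp hb, mul_zero]
    · rw [map_add, hx, hy, add_zero]

/-- A section of a power series along the variable `i`. -/
noncomputable def sec (g : MvPowerSeries (Fin q) ℝ) (i : Fin q) : MvPowerSeries (Fin q) ℝ :=
  fun c => if (c + Finsupp.single i 1).support.min = (i : WithTop (Fin q))
    then g (c + Finsupp.single i 1) else 0

lemma coeff_sec (g : MvPowerSeries (Fin q) ℝ) (i : Fin q) (c : Fin q →₀ ℕ) :
    MvPowerSeries.coeff c (sec g i) =
      if (c + Finsupp.single i 1).support.min = (i : WithTop (Fin q))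
      then MvPowerSeries.coeff (c + Finsupp.single i 1) g else 0 := rfl

lemma decomposition (g : MvPowerSeries (Fin q) ℝ)
    (hg : MvPowerSeries.constantCoeff g = 0) :
    g = ∑ i : Fin q, MvPowerSeries.X i * sec g i := by
  classical
  ext d
  rw [map_sum]
  have hXmul : ∀ i : Fin q, MvPowerSeries.coeff d (MvPowerSeries.X i * sec g i) =
      if Finsupp.single i 1 ≤ d then
        MvPowerSeries.coeff (d - Finsupp.single i 1) (sec g i) else 0 := by
    intro i
    rw [MvPowerSeries.X, MvPowerSeries.coeff_monomial_mul, one_mul]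
  by_cases hd : d = 0
  · subst hd
    rw [Finset.sum_eq_zero, MvPowerSeries.coeff_zero_eq_constantCoeff, hg]
    intro i _
    rw [hXmul i, if_neg]
    intro hle
    have := hle i
    simp at this
  · have hne : d.support.Nonempty := Finsupp.support_nonempty_iff.mpr hd
    set i₀ := d.support.min' hne with hi₀
    rw [Finset.sum_eq_single i₀]
    · have hi₀mem : i₀ ∈ d.support := Finset.min'_mem _ _
      have hle : Finsupp.single i₀ 1 ≤ d := by
        rw [Finsupp.single_le_iff]
        exact Nat.one_le_iff_ne_zero.mpr (Finsupp.mem_support_iff.mp hi₀mem)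
      have hadd : d - Finsupp.single i₀ 1 + Finsupp.single i₀ 1 = d :=
        tsub_add_cancel_of_le hle
      rw [hXmul i₀, if_pos hle, coeff_sec, hadd, if_pos (Finset.coe_min' hne).symm]
    · intro i _ hi
      rw [hXmul i]
      by_cases hle : Finsupp.single i 1 ≤ d
      · rw [if_pos hle, coeff_sec, if_neg]
        rw [tsub_add_cancel_of_le hle]
        intro hmin
        have : (i₀ : WithTop (Fin q)) = (i : WithTop (Fin q)) :=
          (Finset.coe_min' hne).trans hmin
        exact hi (WithTop.coe_injective this).symm
      · rw [if_neg hle]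
    · intro h
      exact absurd (Finset.mem_univ i₀) h

/-- A power series whose coefficients vanish in degrees `< n` lies in `I^n`. -/
lemma mem_pow_of_coeff_eq_zero :
    ∀ n : ℕ, ∀ g : MvPowerSeries (Fin q) ℝ,
      (∀ d : Fin q →₀ ℕ, d.degree < n → MvPowerSeries.coeff d g = 0) → g ∈ (I q) ^ n := by
  intro n
  induction n with
  | zero => intro g _; rw [pow_zero, Ideal.one_eq_top]; exact Submodule.mem_top
  | succ n ih =>
    intro g hcoeff
    have hg0 : MvPowerSeries.constantCoeff g = 0 := by
      have := hcoeff 0 (by simp)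
      rwa [MvPowerSeries.coeff_zero_eq_constantCoeff] at this
    rw [decomposition g hg0, pow_succ']
    refine Ideal.sum_mem _ fun i _ => ?_
    refine Ideal.mul_mem_mul ?_ (ih _ ?_)
    · rw [mem_I, MvPowerSeries.constantCoeff_X]
    · intro c hc
      rw [coeff_sec]
      split
      · apply hcoeff
        rw [degree_add, degree_single]
        omega
      · rfl

lemma smul_top_eq (n : ℕ) :
    ((I q) ^ n • ⊤ : Submodule (MvPowerSeries (Fin q) ℝ) (MvPowerSeries (Fin q) ℝ))
      = ((I q) ^ n : Ideal (MvPowerSeries (Fin q) ℝ)) := by simp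

lemma adicComplete : IsAdicComplete (I q) (MvPowerSeries (Fin q) ℝ) := by
  refine { haus' := ?_, prec' := ?_ }
  · intro x hx
    ext d
    have h := hx (d.degree + 1)
    rw [SModEq.zero, smul_top_eq] at h
    rw [map_zero]
    exact coeff_eq_zero_of_mem_pow _ x h d (by omega)
  · intro f hf
    refine ⟨(fun d => MvPowerSeries.coeff d (f (d.degree + 1)) : MvPowerSeries (Fin q) ℝ), fun n => ?_⟩
    refine SModEq.sub_mem.mpr ?_
    rw [smul_top_eq]
    refine mem_pow_of_coeff_eq_zero n _ fun d hd => ?_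
    set N := max n (d.degree + 1) with hN
    have h1 : f n - f N ∈ (I q) ^ n := by
      have := hf (le_max_left n (d.degree + 1))
      rwa [SModEq.sub_mem, smul_top_eq] at this
    have h2 : f (d.degree + 1) - f N ∈ (I q) ^ (d.degree + 1) := by
      have := hf (le_max_right n (d.degree + 1))
      rwa [SModEq.sub_mem, smul_top_eq] at this
    have e1 : MvPowerSeries.coeff d (f n - f N) = 0 :=
      coeff_eq_zero_of_mem_pow n _ h1 d hd
    have e2 : MvPowerSeries.coeff d (f (d.degree + 1) - f N) = 0 :=
      coeff_eq_zero_of_mem_pow (d.degree + 1) _ h2 d (by omega)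
    rw [map_sub] at e1 e2
    refine (map_sub _ _ _).trans ?_
    have : MvPowerSeries.coeff d
        ((fun d => MvPowerSeries.coeff d (f (d.degree + 1))) : MvPowerSeries (Fin q) ℝ)
        = MvPowerSeries.coeff d (f (d.degree + 1)) := rfl
    rw [this]
    linarith

end NthRootAux

/-- A unit multivariable formal power series over `ℝ` (nonzero constant coefficient)
has an `n`-th root if and only if its constant coefficient has an `n`-th root in `ℝ`. -/
theorem exists_nthRoot_iff_constantCoeff {q n : ℕ} (hq : 1 ≤ q) (hn : 1 ≤ n)
    (f : MvPowerSeries (Fin q) ℝ)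
    (hf : MvPowerSeries.constantCoeff f ≠ 0) :
    (∃ g : MvPowerSeries (Fin q) ℝ, g ^ n = f) ↔
      ∃ t : ℝ, t ^ n = MvPowerSeries.constantCoeff f := by
  constructor
  · rintro ⟨g, rfl⟩
    exact ⟨MvPowerSeries.constantCoeff g, (map_pow _ _ _).symm⟩
  · rintro ⟨t, ht⟩
    have htn : t ^ n ≠ 0 := ht ▸ hf
    set c := MvPowerSeries.constantCoeff f with hc
    set h : MvPowerSeries (Fin q) ℝ := MvPowerSeries.C ((t ^ n)⁻¹) * f with hh
    have hh1 : MvPowerSeries.constantCoeff h = 1 := by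
      rw [hh, map_mul, MvPowerSeries.constantCoeff_C, ← hc, ht]
      field_simp
    haveI : IsAdicComplete (NthRootAux.I q) (MvPowerSeries (Fin q) ℝ) := NthRootAux.adicComplete
    have hens : HenselianRing (MvPowerSeries (Fin q) ℝ) (NthRootAux.I q) := inferInstance
    have hmonic : (Polynomial.X ^ n - Polynomial.C h).Monic :=
      Polynomial.monic_X_pow_sub_C h (by omega)
    have heval : (Polynomial.X ^ n - Polynomial.C h).eval 1 ∈ NthRootAux.I q := by
      rw [NthRootAux.mem_I]
      simp [hh1]
    have hderiv : IsUnit (Ideal.Quotient.mk (NthRootAux.I q)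
        ((Polynomial.X ^ n - Polynomial.C h).derivative.eval 1)) := by
      have : (Polynomial.X ^ n - Polynomial.C h).derivative.eval 1
          = (n : MvPowerSeries (Fin q) ℝ) := by simp [Polynomial.derivative_X_pow]
      rw [this]
      refine IsUnit.map _ ?_
      rw [MvPowerSeries.isUnit_iff_constantCoeff, map_natCast]
      exact isUnit_iff_ne_zero.mpr (Nat.cast_ne_zero.mpr (by omega))
    obtain ⟨a, ha, -⟩ := hens.is_henselian _ hmonic 1 heval hderiv
    have han : a ^ n = h := by
      have := ha
      simp only [Polynomial.IsRoot, Polynomial.eval_sub, Polynomial.eval_pow,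
        Polynomial.eval_X, Polynomial.eval_C, sub_eq_zero] at this
      exact this
    refine ⟨MvPowerSeries.C t * a, ?_⟩
    rw [mul_pow, han, hh, ← map_pow, ← mul_assoc, ← map_mul, mul_inv_cancel₀ htn, map_one, one_mul]
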